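/- Let d ∈ ℕ, d ≥ 1, ρ a density matrix on ℂ^d, {P(f)}_{f∈Ω} a PVM on a nonempty finite set Ω, and U : ℝ → M_d(ℂ) a family of unitary matrices. Then the quantum bi-probabilities are positive semidefinite: for every n ∈ ℕ, all times t_1 < … < t_n, and every function Z : Ω^n → ℂ, the number Σ_{f⁺,f⁻ ∈ Ω^n} Z(f⁺) · Q_{t_n,…,t_1}(f⁺,f⁻) · conj(Z(f⁻)) is real and nonnegative. -/

import Mathlib

open Matrix
open scoped ComplexOrder

/-- The Heisenberg-picture projection at time `t`: `P_t(f) = U(t)* P(f) U(t)`. -/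
noncomputable def heisenbergProj {d : ℕ} {Ω : Type*}
    (P : Ω → Matrix (Fin d) (Fin d) ℂ) (U : ℝ → Matrix (Fin d) (Fin d) ℂ)
    (t : ℝ) (f : Ω) : Matrix (Fin d) (Fin d) ℂ :=
  (U t)ᴴ * P f * U t

/-- The quantum bi-probability
`Q_{t_n,…,t_1}(f⁺,f⁻) = tr[P_{t_n}(f_n⁺)⋯P_{t_1}(f_1⁺) ρ P_{t_1}(f_1⁻)⋯P_{t_n}(f_n⁻)]`,
where indices `j : Fin n` are ordered so that `j = 0` corresponds to the earliest time `t_1`. -/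
noncomputable def quantumBiProb {d : ℕ} {Ω : Type*}
    (ρ : Matrix (Fin d) (Fin d) ℂ) (P : Ω → Matrix (Fin d) (Fin d) ℂ)
    (U : ℝ → Matrix (Fin d) (Fin d) ℂ) {n : ℕ} (t : Fin n → ℝ)
    (fp fm : Fin n → Ω) : ℂ :=
  Matrix.trace
    ((List.ofFn fun j => heisenbergProj P U (t j) (fp j)).reverse.prod * ρ *
      (List.ofFn fun j => heisenbergProj P U (t j) (fm j)).prod)

/-- positive semidefiniteness of the quantum bi-probabilities:
`Σ_{f⁺,f⁻} Z(f⁺) Q(f⁺,f⁻) conj(Z(f⁻))` is real and nonnegative (here expressed using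
the partial order on `ℂ`, for which `0 ≤ z` iff `z` is a nonnegative real number). -/
lemma trace_nonneg_of_posSemidef {d : ℕ} {A : Matrix (Fin d) (Fin d) ℂ}
    (hA : A.PosSemidef) : 0 ≤ A.trace := by
  rw [Matrix.trace]
  apply Finset.sum_nonneg
  intro i _
  exact hA.diag_nonneg

lemma conjT_rev_prod {d : ℕ} (l : List (Matrix (Fin d) (Fin d) ℂ))
    (hl : ∀ A ∈ l, A.IsHermitian) : (l.reverse.prod)ᴴ = l.prod := by
  rw [Matrix.conjTranspose_list_prod, List.map_reverse, List.reverse_reverse]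
  have : List.map conjTranspose l = l := by
    rw [List.map_congr_left (fun A hA => (hl A hA))]; exact List.map_id l
  rw [this]

theorem quantumBiProb_posSemidef {d : ℕ} (hd : 1 ≤ d)
    {Ω : Type*} [Fintype Ω] [Nonempty Ω] [DecidableEq Ω]
    (ρ : Matrix (Fin d) (Fin d) ℂ) (hρ : ρ.PosSemidef) (hρtr : ρ.trace = 1)
    (P : Ω → Matrix (Fin d) (Fin d) ℂ)
    (hPsa : ∀ f, (P f).IsHermitian) (hPidem : ∀ f, P f * P f = P f)
    (hPorth : ∀ f f', f ≠ f' → P f * P f' = 0) (hPsum : ∑ f, P f = 1)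
    (U : ℝ → Matrix (Fin d) (Fin d) ℂ)
    (hU : ∀ t, U t ∈ Matrix.unitaryGroup (Fin d) ℂ)
    (n : ℕ) (t : Fin n → ℝ) (ht : StrictMono t) (Z : (Fin n → Ω) → ℂ) :
    0 ≤ ∑ fp : Fin n → Ω, ∑ fm : Fin n → Ω,
      Z fp * quantumBiProb ρ P U t fp fm * (starRingEnd ℂ) (Z fm) := by
  set A : (Fin n → Ω) → Matrix (Fin d) (Fin d) ℂ :=
    fun f => (List.ofFn fun j => heisenbergProj P U (t j) (f j)).reverse.prod with hA
  set B : (Fin n → Ω) → Matrix (Fin d) (Fin d) ℂ :=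
    fun f => (List.ofFn fun j => heisenbergProj P U (t j) (f j)).prod with hB
  have hherm : ∀ (τ : ℝ) (f : Ω), (heisenbergProj P U τ f).IsHermitian := by
    intro τ f
    unfold heisenbergProj
    rw [Matrix.IsHermitian, Matrix.conjTranspose_mul, Matrix.conjTranspose_mul,
      Matrix.conjTranspose_conjTranspose, (hPsa f).eq, Matrix.mul_assoc]
  have hAB : ∀ f, (A f)ᴴ = B f := by
    intro f
    apply conjT_rev_prod
    intro M hM
    rw [List.mem_ofFn] at hM
    obtain ⟨j, rfl⟩ := hM
    exact hherm _ _
  set M : Matrix (Fin d) (Fin d) ℂ := ∑ fp : Fin n → Ω, Z fp • A fp with hM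
  have hMH : Mᴴ = ∑ fm : Fin n → Ω, (starRingEnd ℂ) (Z fm) • B fm := by
    rw [hM, Matrix.conjTranspose_sum]
    exact Finset.sum_congr rfl fun fm _ => by
      rw [Matrix.conjTranspose_smul, hAB]; rfl
  have key : (∑ fp : Fin n → Ω, ∑ fm : Fin n → Ω,
      Z fp * quantumBiProb ρ P U t fp fm * (starRingEnd ℂ) (Z fm))
      = Matrix.trace (M * ρ * Mᴴ) := by
    rw [hMH, hM]
    simp only [Matrix.sum_mul, Matrix.mul_sum, Matrix.smul_mul, Matrix.mul_smul,
      Matrix.trace_sum, Matrix.trace_smul, smul_eq_mul, smul_smul, quantumBiProb,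
      Finset.mul_sum, Finset.sum_mul, hA, hB]
    rw [Finset.sum_comm]
    refine Finset.sum_congr rfl fun fm _ => Finset.sum_congr rfl fun fp _ => ?_
    ring
  rw [key]
  exact trace_nonneg_of_posSemidef (hρ.mul_mul_conjTranspose_same M)
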